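/- Let (C, ⊗, I) be a monoidal category with finite coproducts and small filtered colimits such that ⊗ preserves filtered colimits in both variables and binary coproducts in the left variable, and let (X∞, μ, η) be the free monoid on X ∈ C constructed as the colimit of X₀ = I, X_{n+1} = I ⨿ (X ⊗ X_n). For m ≥ 1, using the isomorphisms X_m ≅ I ⨿ (X ⊗ X_{m-1}) and X₁ ⊗ X_{m-1} ≅ X_{m-1} ⨿ ((X ⊗ I) ⊗ X_{m-1}) ≅ X_{m-1} ⨿ (X ⊗ X_{m-1}), define s_m : X_m → X₁ ⊗ X_{m-1} as i_{0,m-1} ⨿ id_{X⊗X_{m-1}}. Then μ_{1,m-1} ∘ s_m = id_{X_m}, the s_m are compatible with the connecting maps, their colimit s : X∞ → X₁ ⊗ X∞ satisfies μ_{1,∞} ∘ s = id, and ŝ = (i_{1,∞} ⊗ id) ∘ s : X∞ → X∞ ⊗ X∞ is a section of the free multiplication: μ ∘ ŝ = id_{X∞}. -/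

import Mathlib

open CategoryTheory CategoryTheory.Limits MonoidalCategory

universe v u

variable {C : Type u} [Category.{v} C] [MonoidalCategory C]

section FreeMonoidConstruction

variable [HasBinaryCoproducts C]

/-- The stages of the free monoid construction: `X₀ = I`, `X_{n+1} = I ⨿ (A ⊗ Xₙ)`. -/
noncomputable def freeStage (A : C) : ℕ → C
  | 0 => 𝟙_ C
  | n + 1 => (𝟙_ C) ⨿ (A ⊗ freeStage A n)

/-- The connecting maps `iₙ : Xₙ ⟶ X_{n+1}`. -/
noncomputable def freeConn (A : C) : ∀ n, freeStage A n ⟶ freeStage A (n + 1)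
  | 0 => coprod.inl
  | n + 1 => coprod.map (𝟙 _) (A ◁ freeConn A n)

/-- The chain `X₀ ⟶ X₁ ⟶ X₂ ⟶ ⋯`. -/
noncomputable def freeChain (A : C) : ℕ ⥤ C := Functor.ofSequence (freeConn A)

/-- The composite connecting maps `i_{m,k} : X_m ⟶ X_k`. -/
noncomputable def freeConnTo (A : C) {m k : ℕ} (h : m ≤ k) :
    freeStage A m ⟶ freeStage A k :=
  (freeChain A).map (homOfLE h)

variable [∀ Y : C, PreservesColimitsOfShape (Discrete WalkingPair) (tensorRight Y)]

/-- The partial multiplications `μ_{n,m} : Xₙ ⊗ Xₘ ⟶ X_{n+m}`, defined by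
`μ_{0,m} = λ` and `μ_{n+1,m} = (i_{m,n+1+m}, j ∘ (1 ⊗ μ_{n,m}))` through the
isomorphism `X_{n+1} ⊗ Xₘ ≅ Xₘ ⨿ ((A ⊗ Xₙ) ⊗ Xₘ)`. -/
noncomputable def freeMulAux (A : C) : ∀ n m, freeStage A n ⊗ freeStage A m ⟶ freeStage A (n + m)
  | 0, m => (λ_ (freeStage A m)).hom ≫ eqToHom (congrArg (freeStage A) (Nat.zero_add m).symm)
  | n + 1, m =>
    inv (Y := ((𝟙_ C) ⨿ (A ⊗ freeStage A n)) ⊗ freeStage A m)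
      (coprodComparison (tensorRight (freeStage A m)) (𝟙_ C) (A ⊗ freeStage A n)) ≫
      coprod.desc
        ((λ_ (freeStage A m)).hom ≫ freeConnTo A (Nat.le_add_left m (n + 1)))
        ((α_ A (freeStage A n) (freeStage A m)).hom ≫ (A ◁ freeMulAux A n m) ≫
          (coprod.inr : A ⊗ freeStage A (n + m) ⟶ freeStage A (n + m + 1)) ≫
          eqToHom (congrArg (freeStage A) (by omega : n + m + 1 = n + 1 + m)))

variable [HasColimitsOfShape ℕ C]

/-- The universe `X∞` of the free monoid on `A`. -/
noncomputable def freeUniverse (A : C) : C := colimit (freeChain A)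

/-- The canonical maps `i_{n,∞} : Xₙ ⟶ X∞`. -/
noncomputable def freeι (A : C) (n : ℕ) : freeStage A n ⟶ freeUniverse A :=
  colimit.ι (freeChain A) n

/-- The unit `η : I = X₀ ⟶ X∞` of the free monoid. -/
noncomputable def freeUnit (A : C) : 𝟙_ C ⟶ freeUniverse A := freeι A 0

/-- The universal arrow `A ⟶ X∞` of the free monoid adjunction. -/
noncomputable def freeGen (A : C) : A ⟶ freeUniverse A :=
  (ρ_ A).inv ≫ (coprod.inr : A ⊗ freeStage A 0 ⟶ freeStage A 1) ≫ freeι A 1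

/-- The stages `fₙ : Xₙ(A) ⟶ Xₙ(B)` of the free monoid construction on a morphism. -/
noncomputable def freeStageMap {A B : C} (f : A ⟶ B) :
    ∀ n, freeStage A n ⟶ freeStage B n
  | 0 => 𝟙 _
  | n + 1 => coprod.map (𝟙 _) (f ⊗ₘ freeStageMap f n)

end FreeMonoidConstruction


section Sections

variable [HasBinaryCoproducts C]
  [∀ Y : C, PreservesColimitsOfShape (Discrete WalkingPair) (tensorRight Y)]

/-- The canonical sections `s_{m+1} : X_{m+1} ⟶ X₁ ⊗ Xₘ`, defined through the
isomorphisms `X_{m+1} ≅ I ⨿ (A ⊗ Xₘ)` and `X₁ ⊗ Xₘ ≅ Xₘ ⨿ (A ⊗ Xₘ)` as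
`i_{0,m} ⨿ 𝟙`. -/
noncomputable def freeSec (A : C) (m : ℕ) : freeStage A (m + 1) ⟶ freeStage A 1 ⊗ freeStage A m :=
  coprod.desc
    (freeConnTo A (Nat.zero_le m) ≫ (λ_ (freeStage A m)).inv ≫
      ((coprod.inl : 𝟙_ C ⟶ freeStage A 1) ▷ freeStage A m))
    (((ρ_ A).inv ▷ freeStage A m) ≫
      ((coprod.inr : A ⊗ freeStage A 0 ⟶ freeStage A 1) ▷ freeStage A m))

end Sections

/-!
# Statement 5 (canonical sections of the free multiplication)

The canonical sections `sₘ : Xₘ ⟶ X₁ ⊗ X_{m-1}` satisfy `μ_{1,m-1} ∘ sₘ = 𝟙`, are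
compatible with the connecting maps, and their colimit `s : X∞ ⟶ X₁ ⊗ X∞` satisfies
`μ_{1,∞} ∘ s = 𝟙`; hence `ŝ = (i_{1,∞} ⊗ 𝟙) ∘ s` is a section of the free
multiplication `μ : X∞ ⊗ X∞ ⟶ X∞`.
-/

/-! ## Auxiliary lemmas -/

section Aux

lemma tensorRight_map (X : C) {Y Z : C} (f : Y ⟶ Z) : (tensorRight X).map f = f ▷ X := rfl

variable [HasBinaryCoproducts C]

lemma connTo_succ (A : C) (n : ℕ) : freeConnTo A (Nat.le_add_right n 1) = freeConn A n :=
  Functor.ofSequence_map_homOfLE_succ _ n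

lemma connTo_conn (A : C) {a b : ℕ} (h : a ≤ b) :
    freeConnTo A h ≫ freeConn A b = freeConnTo A (by omega : a ≤ b + 1) := by
  erw [← connTo_succ, freeConnTo, freeConnTo, freeConnTo, ← Functor.map_comp]
  rfl

lemma connTo_refl (A : C) (a : ℕ) : freeConnTo A (le_refl a) = 𝟙 _ := by
  rw [freeConnTo]
  exact CategoryTheory.Functor.map_id _ a

lemma connTo_trans (A : C) {a b c : ℕ} (h1 : a ≤ b) (h2 : b ≤ c) :
    freeConnTo A h1 ≫ freeConnTo A h2 = freeConnTo A (le_trans h1 h2) := by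
  erw [freeConnTo, freeConnTo, freeConnTo, ← Functor.map_comp]
  rfl

lemma eqToHom_connTo (A : C) {a b c : ℕ} (h : a = b) (h2 : b ≤ c) :
    eqToHom (congrArg (freeStage A) h) ≫ freeConnTo A h2 =
      freeConnTo A (by omega : a ≤ c) := by
  subst h; simp

lemma connTo_eqToHom (A : C) {a b c : ℕ} (h : a ≤ b) (h2 : b = c) :
    freeConnTo A h ≫ eqToHom (congrArg (freeStage A) h2) =
      freeConnTo A (by omega : a ≤ c) := by
  subst h2; simp

lemma conn_eqToHom (A : C) {a b : ℕ} (h : a = b) :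
    eqToHom (congrArg (freeStage A) h) ≫ freeConn A b =
      freeConn A a ≫ eqToHom (congrArg (freeStage A) (show a + 1 = b + 1 by rw [h])) := by
  subst h; simp

lemma inr_eqToHom (A : C) {a b : ℕ} (h : a = b) :
    (A ◁ eqToHom (congrArg (freeStage A) h)) ≫
        (coprod.inr : A ⊗ freeStage A b ⟶ freeStage A (b + 1)) =
      (coprod.inr : A ⊗ freeStage A a ⟶ freeStage A (a + 1)) ≫
        eqToHom (congrArg (freeStage A) (show a + 1 = b + 1 by rw [h])) := by
  subst h; simp; exact (Category.comp_id _).symm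

lemma inl_eq_connTo (A : C) (m : ℕ) :
    (coprod.inl : 𝟙_ C ⟶ freeStage A (m + 1)) = freeConnTo A (Nat.zero_le (m + 1)) := by
  induction m with
  | zero => exact (connTo_succ A 0).symm
  | succ k ih =>
      have : freeConnTo A (Nat.zero_le (k + 1 + 1)) =
          freeConnTo A (Nat.zero_le (k + 1)) ≫ freeConn A (k + 1) := by
        rw [connTo_conn]
      rw [this, ← ih]
      show _ = coprod.inl ≫ coprod.map (𝟙 _) (A ◁ freeConn A k)
      simp

variable [∀ Y : C, PreservesColimitsOfShape (Discrete WalkingPair) (tensorRight Y)]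

lemma mul_succ_inl (A : C) (n m : ℕ) :
    (coprod.inl ▷ freeStage A m) ≫ freeMulAux A (n + 1) m =
      (λ_ (freeStage A m)).hom ≫ freeConnTo A (Nat.le_add_left m (n + 1)) := by
  show ((tensorRight (freeStage A m)).map coprod.inl) ≫ freeMulAux A (n + 1) m = _
  erw [freeMulAux, ← Category.assoc, map_inl_inv_coprodComparison, coprod.inl_desc]

lemma mul_succ_inr (A : C) (n m : ℕ) :
    (coprod.inr ▷ freeStage A m) ≫ freeMulAux A (n + 1) m =
      (α_ A (freeStage A n) (freeStage A m)).hom ≫ (A ◁ freeMulAux A n m) ≫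
        (coprod.inr : A ⊗ freeStage A (n + m) ⟶ freeStage A (n + m + 1)) ≫
        eqToHom (congrArg (freeStage A) (by omega : n + m + 1 = n + 1 + m)) := by
  show ((tensorRight (freeStage A m)).map coprod.inr) ≫ freeMulAux A (n + 1) m = _
  erw [freeMulAux, ← Category.assoc, map_inr_inv_coprodComparison, coprod.inr_desc]

end Aux

section Nat

variable [HasBinaryCoproducts C]

lemma conn_connTo (A : C) {a c : ℕ} (h : a + 1 ≤ c) :
    freeConn A a ≫ freeConnTo A h = freeConnTo A (by omega : a ≤ c) := by
  rw [← connTo_succ, connTo_trans]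

lemma inr_conn (A : C) (k : ℕ) :
    (A ◁ freeConn A k) ≫ (coprod.inr : A ⊗ freeStage A (k + 1) ⟶ freeStage A (k + 2)) =
      (coprod.inr : A ⊗ freeStage A k ⟶ freeStage A (k + 1)) ≫ freeConn A (k + 1) := by
  show _ = coprod.inr ≫ coprod.map (𝟙 _) (A ◁ freeConn A k)
  simp

lemma inr_connTo (A : C) {a b : ℕ} (h : a ≤ b) :
    (A ◁ freeConnTo A h) ≫ (coprod.inr : A ⊗ freeStage A b ⟶ freeStage A (b + 1)) =
      (coprod.inr : A ⊗ freeStage A a ⟶ freeStage A (a + 1)) ≫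
        freeConnTo A (by omega : a + 1 ≤ b + 1) := by
  induction b, h using Nat.le_induction with
  | base =>
      rw [connTo_refl, connTo_refl]
      simp only [MonoidalCategory.whiskerLeft_id, Category.id_comp]
      exact (Category.comp_id _).symm
  | succ b hb ih =>
      have h1 : freeConnTo A (by omega : a ≤ b + 1) =
          freeConnTo A hb ≫ freeConn A b := (connTo_conn A hb).symm
      have h2 : freeConnTo A (by omega : a + 1 ≤ b + 2) =
          freeConnTo A (by omega : a + 1 ≤ b + 1) ≫ freeConn A (b + 1) :=
        (connTo_conn A (by omega)).symm
      erw [h1, h2, MonoidalCategory.whiskerLeft_comp, Category.assoc, inr_conn,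
        ← Category.assoc, ih, Category.assoc]
      rfl

variable [∀ Y : C, PreservesColimitsOfShape (Discrete WalkingPair) (tensorRight Y)]

/-- Naturality of the partial multiplications in the right variable. -/
lemma mulAux_conn_right (A : C) (n m : ℕ) :
    (freeStage A n ◁ freeConn A m) ≫ freeMulAux A n (m + 1) =
      freeMulAux A n m ≫ freeConn A (n + m) := by
  induction n with
  | zero =>
      show (𝟙_ C ◁ freeConn A m) ≫ ((λ_ _).hom ≫ _) = ((λ_ _).hom ≫ _) ≫ _
      rw [← Category.assoc, MonoidalCategory.leftUnitor_naturality, Category.assoc,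
        Category.assoc, conn_eqToHom A (Nat.zero_add m).symm]
  | succ n ih =>
      have einl : (coprod.inl ▷ freeStage A m) ≫ (freeStage A (n + 1) ◁ freeConn A m) =
          (𝟙_ C ◁ freeConn A m) ≫ (coprod.inl ▷ freeStage A (m + 1)) :=
        (whisker_exchange _ _).symm
      have einr : (coprod.inr ▷ freeStage A m) ≫ (freeStage A (n + 1) ◁ freeConn A m) =
          ((A ⊗ freeStage A n) ◁ freeConn A m) ≫ (coprod.inr ▷ freeStage A (m + 1)) :=
        (whisker_exchange _ _).symm
      erw [← cancel_epi (coprodComparison (tensorRight (freeStage A m)) (𝟙_ C)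
        (A ⊗ freeStage A n))]
      apply coprod.hom_ext
      · calc coprod.inl ≫ coprodComparison (tensorRight (freeStage A m)) _ _ ≫
              (freeStage A (n + 1) ◁ freeConn A m) ≫ freeMulAux A (n + 1) (m + 1)
            = (𝟙_ C ◁ freeConn A m) ≫ (coprod.inl ▷ freeStage A (m + 1)) ≫
                freeMulAux A (n + 1) (m + 1) := by
              conv_lhs => erw [← Category.assoc, coprodComparison_inl, tensorRight_map,
                ← Category.assoc, einl, Category.assoc]
              rfl
          _ = (λ_ _).hom ≫ freeConn A m ≫
                freeConnTo A (Nat.le_add_left (m + 1) (n + 1)) := by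
              rw [mul_succ_inl, ← Category.assoc, MonoidalCategory.leftUnitor_naturality,
                Category.assoc]
          _ = (λ_ _).hom ≫ freeConnTo A (by omega : m ≤ n + 1 + (m + 1)) := by
              rw [conn_connTo]
          _ = coprod.inl ≫ coprodComparison (tensorRight (freeStage A m)) _ _ ≫
              freeMulAux A (n + 1) m ≫ freeConn A (n + 1 + m) := by
              conv_rhs => erw [← Category.assoc, coprodComparison_inl, tensorRight_map,
                ← Category.assoc, mul_succ_inl, Category.assoc, connTo_conn]
      · calc coprod.inr ≫ coprodComparison (tensorRight (freeStage A m)) _ _ ≫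
              (freeStage A (n + 1) ◁ freeConn A m) ≫ freeMulAux A (n + 1) (m + 1)
            = ((A ⊗ freeStage A n) ◁ freeConn A m) ≫ (coprod.inr ▷ freeStage A (m + 1)) ≫
                freeMulAux A (n + 1) (m + 1) := by
              conv_lhs => erw [← Category.assoc, coprodComparison_inr, tensorRight_map,
                ← Category.assoc, einr, Category.assoc]
              rfl
          _ = ((A ⊗ freeStage A n) ◁ freeConn A m) ≫
                (α_ A (freeStage A n) (freeStage A (m + 1))).hom ≫
                (A ◁ freeMulAux A n (m + 1)) ≫ coprod.inr ≫
                eqToHom (congrArg (freeStage A)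
                  (by omega : n + (m + 1) + 1 = n + 1 + (m + 1))) := by
              rw [mul_succ_inr]
          _ = (α_ A (freeStage A n) (freeStage A m)).hom ≫
                (A ◁ ((freeStage A n ◁ freeConn A m) ≫ freeMulAux A n (m + 1))) ≫ coprod.inr ≫
                eqToHom (congrArg (freeStage A)
                  (by omega : n + (m + 1) + 1 = n + 1 + (m + 1))) := by
              rw [← Category.assoc, associator_naturality_right, Category.assoc,
                MonoidalCategory.whiskerLeft_comp, Category.assoc]
          _ = (α_ A (freeStage A n) (freeStage A m)).hom ≫
                (A ◁ freeMulAux A n m) ≫ (A ◁ freeConn A (n + m)) ≫ coprod.inr ≫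
                eqToHom (congrArg (freeStage A)
                  (by omega : n + (m + 1) + 1 = n + 1 + (m + 1))) := by
              rw [ih, MonoidalCategory.whiskerLeft_comp, Category.assoc]
              rfl
          _ = (α_ A (freeStage A n) (freeStage A m)).hom ≫
                (A ◁ freeMulAux A n m) ≫ coprod.inr ≫ freeConn A (n + m + 1) ≫
                eqToHom (congrArg (freeStage A)
                  (by omega : n + (m + 1) + 1 = n + 1 + (m + 1))) := by
              erw [← Category.assoc ((A ◁ freeConn A (n + m))), inr_conn, Category.assoc]
              rfl
          _ = (α_ A (freeStage A n) (freeStage A m)).hom ≫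
                (A ◁ freeMulAux A n m) ≫ coprod.inr ≫
                eqToHom (congrArg (freeStage A) (by omega : n + m + 1 = n + 1 + m)) ≫
                freeConn A (n + 1 + m) := by
              erw [conn_eqToHom A (by omega : n + m + 1 = n + 1 + m)]
              rfl
          _ = coprod.inr ≫ coprodComparison (tensorRight (freeStage A m)) _ _ ≫
              freeMulAux A (n + 1) m ≫ freeConn A (n + 1 + m) := by
              conv_rhs => erw [← Category.assoc, coprodComparison_inr, tensorRight_map,
                ← Category.assoc, mul_succ_inr]
              simp only [Category.assoc]

/-- Naturality of the partial multiplications in the left variable. -/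
lemma mulAux_conn_left (A : C) (n m : ℕ) :
    (freeConn A n ▷ freeStage A m) ≫ freeMulAux A (n + 1) m =
      freeMulAux A n m ≫ freeConnTo A (by omega : n + m ≤ n + 1 + m) := by
  induction n with
  | zero =>
      show (coprod.inl ▷ freeStage A m) ≫ freeMulAux A (0 + 1) m =
        ((λ_ _).hom ≫ _) ≫ freeConnTo A _
      rw [mul_succ_inl, Category.assoc,
        eqToHom_connTo A (Nat.zero_add m).symm (by omega : 0 + m ≤ 0 + 1 + m)]
  | succ n ih =>
      erw [← cancel_epi (coprodComparison (tensorRight (freeStage A m)) (𝟙_ C)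
        (A ⊗ freeStage A n))]
      have hinl : coprod.inl ≫ freeConn A (n + 1) =
          (coprod.inl : 𝟙_ C ⟶ freeStage A (n + 2)) := by
        show coprod.inl ≫ coprod.map (𝟙 _) (A ◁ freeConn A n) = _
        simp
      have hinr : coprod.inr ≫ freeConn A (n + 1) =
          (A ◁ freeConn A n) ≫ (coprod.inr : A ⊗ freeStage A (n + 1) ⟶ freeStage A (n + 2)) := by
        show coprod.inr ≫ coprod.map (𝟙 _) (A ◁ freeConn A n) = _
        simp
      apply coprod.hom_ext
      · calc coprod.inl ≫ coprodComparison (tensorRight (freeStage A m)) _ _ ≫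
              (freeConn A (n + 1) ▷ freeStage A m) ≫ freeMulAux A (n + 2) m
            = ((coprod.inl ≫ freeConn A (n + 1)) ▷ freeStage A m) ≫
                freeMulAux A (n + 2) m := by
              conv_lhs => erw [← Category.assoc, coprodComparison_inl, tensorRight_map,
                ← Category.assoc, ← comp_whiskerRight]
          _ = (λ_ _).hom ≫ freeConnTo A (by omega : m ≤ n + 2 + m) := by
              erw [hinl, mul_succ_inl]
          _ = coprod.inl ≫ coprodComparison (tensorRight (freeStage A m)) _ _ ≫
              freeMulAux A (n + 1) m ≫ freeConnTo A (by omega : n + 1 + m ≤ n + 2 + m) := by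
              conv_rhs => erw [← Category.assoc, coprodComparison_inl, tensorRight_map,
                ← Category.assoc, mul_succ_inl, Category.assoc, connTo_trans]
      · calc coprod.inr ≫ coprodComparison (tensorRight (freeStage A m)) _ _ ≫
              (freeConn A (n + 1) ▷ freeStage A m) ≫ freeMulAux A (n + 2) m
            = (((A ◁ freeConn A n) ≫ coprod.inr) ▷ freeStage A m) ≫
                freeMulAux A (n + 2) m := by
              conv_lhs => erw [← Category.assoc, coprodComparison_inr, tensorRight_map,
                ← Category.assoc, ← comp_whiskerRight, hinr]
              rfl
          _ = ((A ◁ freeConn A n) ▷ freeStage A m) ≫ (coprod.inr ▷ freeStage A m) ≫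
                freeMulAux A (n + 2) m := by
              erw [comp_whiskerRight, Category.assoc]
          _ = ((A ◁ freeConn A n) ▷ freeStage A m) ≫
                (α_ A (freeStage A (n + 1)) (freeStage A m)).hom ≫
                (A ◁ freeMulAux A (n + 1) m) ≫ coprod.inr ≫
                eqToHom (congrArg (freeStage A) (by omega : n + 1 + m + 1 = n + 2 + m)) := by
              rw [mul_succ_inr]
          _ = (α_ A (freeStage A n) (freeStage A m)).hom ≫
                (A ◁ ((freeConn A n ▷ freeStage A m) ≫ freeMulAux A (n + 1) m)) ≫
                coprod.inr ≫
                eqToHom (congrArg (freeStage A) (by omega : n + 1 + m + 1 = n + 2 + m)) := by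
              rw [← Category.assoc, associator_naturality_middle, Category.assoc,
                MonoidalCategory.whiskerLeft_comp, Category.assoc]
          _ = (α_ A (freeStage A n) (freeStage A m)).hom ≫
                (A ◁ freeMulAux A n m) ≫ (A ◁ freeConnTo A (by omega : n + m ≤ n + 1 + m)) ≫
                coprod.inr ≫
                eqToHom (congrArg (freeStage A) (by omega : n + 1 + m + 1 = n + 2 + m)) := by
              rw [ih, MonoidalCategory.whiskerLeft_comp, Category.assoc]
          _ = (α_ A (freeStage A n) (freeStage A m)).hom ≫
                (A ◁ freeMulAux A n m) ≫ coprod.inr ≫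
                freeConnTo A (by omega : n + m + 1 ≤ n + 1 + m + 1) ≫
                eqToHom (congrArg (freeStage A) (by omega : n + 1 + m + 1 = n + 2 + m)) := by
              erw [← Category.assoc (A ◁ freeConnTo A _),
                inr_connTo A (by omega : n + m ≤ n + 1 + m), Category.assoc]
              rfl
          _ = (α_ A (freeStage A n) (freeStage A m)).hom ≫
                (A ◁ freeMulAux A n m) ≫ coprod.inr ≫
                eqToHom (congrArg (freeStage A) (by omega : n + m + 1 = n + 1 + m)) ≫
                freeConnTo A (by omega : n + 1 + m ≤ n + 2 + m) := by
              erw [connTo_eqToHom A (by omega : n + m + 1 ≤ n + 1 + m + 1)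
                  (by omega : n + 1 + m + 1 = n + 2 + m),
                eqToHom_connTo A (by omega : n + m + 1 = n + 1 + m)
                  (by omega : n + 1 + m ≤ n + 2 + m)]
          _ = coprod.inr ≫ coprodComparison (tensorRight (freeStage A m)) _ _ ≫
              freeMulAux A (n + 1) m ≫ freeConnTo A (by omega : n + 1 + m ≤ n + 2 + m) := by
              conv_rhs => erw [← Category.assoc, coprodComparison_inr, tensorRight_map,
                ← Category.assoc, mul_succ_inr]
              simp only [Category.assoc]

/-- `μ_{1,m} ∘ s_{m+1} = 𝟙`. -/
lemma sec_mulAux (A : C) (m : ℕ) :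
    freeSec A m ≫ freeMulAux A 1 m =
      eqToHom (congrArg (freeStage A) (Nat.add_comm m 1)) := by
  apply coprod.hom_ext
  · calc (coprod.inl ≫ freeSec A m ≫ freeMulAux A (0 + 1) m : freeStage A 0 ⟶ freeStage A (0 + 1 + m))
        = freeConnTo A (Nat.zero_le m) ≫ (λ_ _).inv ≫
            (coprod.inl ▷ freeStage A m) ≫ freeMulAux A (0 + 1) m := by
          erw [← Category.assoc, freeSec, coprod.inl_desc, Category.assoc, Category.assoc]
          rfl
      _ = freeConnTo A (Nat.zero_le m) ≫ freeConnTo A (Nat.le_add_left m 1) := by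
          rw [mul_succ_inl, Iso.inv_hom_id_assoc]
      _ = freeConnTo A (by omega : 0 ≤ 1 + m) := connTo_trans _ _ _
      _ = (coprod.inl ≫ eqToHom (congrArg (freeStage A) (by omega : m + 1 = 1 + m)) :
            freeStage A 0 ⟶ freeStage A (1 + m)) := by
          erw [inl_eq_connTo,
            connTo_eqToHom A (Nat.zero_le (m + 1)) (by omega : m + 1 = 1 + m)]
  · calc coprod.inr ≫ freeSec A m ≫ freeMulAux A (0 + 1) m
        = ((ρ_ A).inv ▷ freeStage A m) ≫ (coprod.inr ▷ freeStage A m) ≫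
            freeMulAux A (0 + 1) m := by
          erw [← Category.assoc, freeSec, coprod.inr_desc, Category.assoc]
          rfl
      _ = ((ρ_ A).inv ▷ freeStage A m) ≫ (α_ A (𝟙_ C) (freeStage A m)).hom ≫
            (A ◁ freeMulAux A 0 m) ≫ coprod.inr ≫
            eqToHom (congrArg (freeStage A) (by omega : 0 + m + 1 = 0 + 1 + m)) := by
          have h := congrArg (fun t => ((ρ_ A).inv ▷ freeStage A m) ≫ t) (mul_succ_inr A 0 m)
          beta_reduce at h
          exact h
      _ = ((ρ_ A).inv ▷ freeStage A m) ≫ (α_ A (𝟙_ C) (freeStage A m)).hom ≫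
            (A ◁ (λ_ (freeStage A m)).hom) ≫
            ((A ◁ eqToHom (congrArg (freeStage A) (Nat.zero_add m).symm)) ≫ coprod.inr) ≫
            eqToHom (congrArg (freeStage A) (by omega : 0 + m + 1 = 0 + 1 + m)) := by
          erw [freeMulAux, MonoidalCategory.whiskerLeft_comp]
          simp only [Category.assoc]
      _ = ((A ◁ eqToHom (congrArg (freeStage A) (Nat.zero_add m).symm)) ≫ coprod.inr) ≫
            eqToHom (congrArg (freeStage A) (by omega : 0 + m + 1 = 0 + 1 + m)) := by
          rw [← Category.assoc, ← Category.assoc, Category.assoc ((ρ_ A).inv ▷ _),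
            MonoidalCategory.triangle, ← comp_whiskerRight, Iso.inv_hom_id,
            MonoidalCategory.id_whiskerRight, Category.id_comp]
      _ = coprod.inr ≫ eqToHom (congrArg (freeStage A) (by omega : m + 1 = 0 + m + 1)) ≫
            eqToHom (congrArg (freeStage A) (by omega : 0 + m + 1 = 0 + 1 + m)) := by
          rw [inr_eqToHom A (Nat.zero_add m).symm]
          erw [Category.assoc]
          rfl
      _ = coprod.inr ≫ eqToHom (congrArg (freeStage A) (by omega : m + 1 = 1 + m)) := by
          erw [eqToHom_trans]

/-- Compatibility of the canonical sections with the connecting maps. -/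
lemma sec_conn (A : C) (m : ℕ) :
    freeConn A (m + 1) ≫ freeSec A (m + 1) =
      freeSec A m ≫ (freeStage A 1 ◁ freeConn A m) := by
  have einl : (𝟙_ C ◁ freeConn A m) ≫ (coprod.inl ▷ freeStage A (m + 1)) =
      (coprod.inl ▷ freeStage A m) ≫ (freeStage A 1 ◁ freeConn A m) :=
    whisker_exchange _ _
  have einr : ((A ⊗ 𝟙_ C) ◁ freeConn A m) ≫ (coprod.inr ▷ freeStage A (m + 1)) =
      (coprod.inr ▷ freeStage A m) ≫ (freeStage A 1 ◁ freeConn A m) :=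
    whisker_exchange _ _
  have eρ : (A ◁ freeConn A m) ≫ ((ρ_ A).inv ▷ freeStage A (m + 1)) =
      ((ρ_ A).inv ▷ freeStage A m) ≫ ((A ⊗ 𝟙_ C) ◁ freeConn A m) :=
    whisker_exchange _ _
  have hinl : coprod.inl ≫ freeConn A (m + 1) =
      (coprod.inl : 𝟙_ C ⟶ freeStage A (m + 2)) := by
    show coprod.inl ≫ coprod.map (𝟙 _) (A ◁ freeConn A m) = _
    simp
  have hinr : coprod.inr ≫ freeConn A (m + 1) =
      (A ◁ freeConn A m) ≫ (coprod.inr : A ⊗ freeStage A (m + 1) ⟶ freeStage A (m + 2)) := by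
    show coprod.inr ≫ coprod.map (𝟙 _) (A ◁ freeConn A m) = _
    simp
  apply coprod.hom_ext
  · calc (coprod.inl ≫ freeConn A (m + 1) ≫ freeSec A (m + 1) :
        freeStage A 0 ⟶ (𝟙_ C ⨿ A ⊗ freeStage A 0) ⊗ freeStage A (m + 1))
        = freeConnTo A (Nat.zero_le (m + 1)) ≫ (λ_ _).inv ≫
            (coprod.inl ▷ freeStage A (m + 1)) := by
          erw [← Category.assoc, hinl, freeSec, coprod.inl_desc]
          rfl
      _ = freeConnTo A (Nat.zero_le m) ≫ (freeConn A m ≫ (λ_ _).inv) ≫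
            (coprod.inl ▷ freeStage A (m + 1)) := by
          rw [show freeConnTo A (Nat.zero_le (m + 1)) =
              freeConnTo A (Nat.zero_le m) ≫ freeConn A m from
            (connTo_conn A (Nat.zero_le m)).symm]
          simp only [Category.assoc]
      _ = freeConnTo A (Nat.zero_le m) ≫ (λ_ _).inv ≫
            ((𝟙_ C ◁ freeConn A m) ≫ (coprod.inl ▷ freeStage A (m + 1))) := by
          rw [MonoidalCategory.leftUnitor_inv_naturality]
          simp only [Category.assoc]
      _ = (coprod.inl ≫ freeSec A m ≫ (freeStage A 1 ◁ freeConn A m) :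
            freeStage A 0 ⟶ (𝟙_ C ⨿ A ⊗ freeStage A 0) ⊗ freeStage A (m + 1)) := by
          rw [einl]
          conv_rhs => erw [← Category.assoc, freeSec, coprod.inl_desc]
          erw [Category.assoc, Category.assoc]
          rfl
  · calc (coprod.inr ≫ freeConn A (m + 1) ≫ freeSec A (m + 1) :
        A ⊗ freeStage A m ⟶ (𝟙_ C ⨿ A ⊗ 𝟙_ C) ⊗ freeStage A (m + 1))
        = (A ◁ freeConn A m) ≫ ((ρ_ A).inv ▷ freeStage A (m + 1)) ≫
            (coprod.inr ▷ freeStage A (m + 1)) := by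
          erw [← Category.assoc, hinr, Category.assoc, freeSec, coprod.inr_desc]
          rfl
      _ = ((ρ_ A).inv ▷ freeStage A m) ≫
            (((A ⊗ 𝟙_ C) ◁ freeConn A m) ≫ (coprod.inr ▷ freeStage A (m + 1))) := by
          rw [← Category.assoc, eρ]
          simp only [Category.assoc]
      _ = (coprod.inr ≫ freeSec A m ≫ (freeStage A 1 ◁ freeConn A m) :
            A ⊗ freeStage A m ⟶ (𝟙_ C ⨿ A ⊗ 𝟙_ C) ⊗ freeStage A (m + 1)) := by
          rw [einr]
          conv_rhs => erw [← Category.assoc, freeSec, coprod.inr_desc]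
          erw [Category.assoc]
          rfl

end Nat

section Colimits

variable [HasBinaryCoproducts C]
  [∀ Y : C, PreservesColimitsOfShape (Discrete WalkingPair) (tensorRight Y)]
  [HasColimitsOfShape ℕ C]

lemma iota_conn (A : C) (k : ℕ) : freeConn A k ≫ freeι A (k + 1) = freeι A k := by
  rw [← connTo_succ]
  exact colimit.w (freeChain A) (homOfLE (Nat.le_add_right k 1))

lemma connTo_iota (A : C) {a b : ℕ} (h : a ≤ b) :
    freeConnTo A h ≫ freeι A b = freeι A a :=
  colimit.w (freeChain A) (homOfLE h)

lemma eqToHom_iota (A : C) {a b : ℕ} (h : a = b) :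
    eqToHom (congrArg (freeStage A) h) ≫ freeι A b = freeι A a := by
  subst h; simp

end Colimits

theorem canonical_section
    [HasFiniteCoproducts C] [HasFilteredColimitsOfSize.{0, 0} C]
    [∀ Y : C, PreservesColimitsOfShape (Discrete WalkingPair) (tensorRight Y)]
    [∀ Y : C, PreservesFilteredColimitsOfSize.{0, 0} (tensorRight Y)]
    [∀ Y : C, PreservesFilteredColimitsOfSize.{0, 0} (tensorLeft Y)] (A : C) :
    -- `μ_{1,m} ∘ s_{m+1} = 𝟙`
    (∀ m : ℕ, freeSec A m ≫ freeMulAux A 1 m =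
      eqToHom (congrArg (freeStage A) (by omega : m + 1 = 1 + m))) ∧
    -- compatibility with the connecting maps: `(1 ⊗ iₘ) ∘ s_{m+1} = s_{m+2} ∘ i_{m+1}`
    (∀ m : ℕ, freeConn A (m + 1) ≫ freeSec A (m + 1) =
      freeSec A m ≫ (freeStage A 1 ◁ freeConn A m)) ∧
    -- the colimit `s` of the `sₘ` is a section of `μ_{1,∞}`, and `ŝ = (i_{1,∞} ⊗ 𝟙) ∘ s`
    -- is a section of the free multiplication `μ`
    (∃ (μ : freeUniverse A ⊗ freeUniverse A ⟶ freeUniverse A)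
        (μ₁ : freeStage A 1 ⊗ freeUniverse A ⟶ freeUniverse A)
        (s : freeUniverse A ⟶ freeStage A 1 ⊗ freeUniverse A),
      (∀ n m, (freeι A n ⊗ₘ freeι A m) ≫ μ = freeMulAux A n m ≫ freeι A (n + m)) ∧
      (∀ m, (freeStage A 1 ◁ freeι A m) ≫ μ₁ = freeMulAux A 1 m ≫ freeι A (1 + m)) ∧
      (∀ m, freeι A (m + 1) ≫ s = freeSec A m ≫ (freeStage A 1 ◁ freeι A m)) ∧
      μ₁ = (freeι A 1 ▷ freeUniverse A) ≫ μ ∧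
      s ≫ μ₁ = 𝟙 (freeUniverse A) ∧
      s ≫ (freeι A 1 ▷ freeUniverse A) ≫ μ = 𝟙 (freeUniverse A)) := by
  haveI : ∀ Y : C, PreservesColimitsOfShape ℕ (tensorLeft Y) := fun Y =>
    PreservesFilteredColimitsOfSize.preserves_filtered_colimits ℕ
  haveI : ∀ Y : C, PreservesColimitsOfShape ℕ (tensorRight Y) := fun Y =>
    PreservesFilteredColimitsOfSize.preserves_filtered_colimits ℕ
  refine ⟨fun m => sec_mulAux A m, fun m => sec_conn A m, ?_⟩
  -- the colimit `μ_{n,∞} : Xₙ ⊗ X∞ ⟶ X∞` of the partial multiplications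
  have hcL : ∀ n : ℕ, IsColimit ((tensorLeft (freeStage A n)).mapCocone
      (colimit.cocone (freeChain A))) := fun n =>
    isColimitOfPreserves _ (colimit.isColimit _)
  let Mcone : ∀ n : ℕ, Cocone (freeChain A ⋙ tensorLeft (freeStage A n)) := fun n =>
    { pt := freeUniverse A
      ι := NatTrans.ofSequence
        (fun m => freeMulAux A n m ≫ freeι A (n + m))
        (by
          intro m
          rw [Functor.comp_map,
            show (freeChain A).map (homOfLE (m.le_add_right 1)) = freeConn A m from
              connTo_succ A m]
          show (freeStage A n ◁ freeConn A m) ≫ freeMulAux A n (m + 1) ≫ freeι A (n + (m + 1))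
            = (freeMulAux A n m ≫ freeι A (n + m)) ≫ 𝟙 _
          rw [Category.comp_id, ← Category.assoc, mulAux_conn_right, Category.assoc]
          show freeMulAux A n m ≫ freeConn A (n + m) ≫ freeι A (n + m + 1) =
            freeMulAux A n m ≫ freeι A (n + m)
          rw [iota_conn]) }
  let M : ∀ n : ℕ, freeStage A n ⊗ freeUniverse A ⟶ freeUniverse A := fun n =>
    (hcL n).desc (Mcone n)
  have hM : ∀ n m, (freeStage A n ◁ freeι A m) ≫ M n =
      freeMulAux A n m ≫ freeι A (n + m) := fun n m => (hcL n).fac (Mcone n) m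
  have hMnat : ∀ n : ℕ, (freeConn A n ▷ freeUniverse A) ≫ M (n + 1) = M n := by
    intro n
    apply (hcL n).hom_ext
    intro m
    show (freeStage A n ◁ freeι A m) ≫ (freeConn A n ▷ freeUniverse A) ≫ M (n + 1) =
      (freeStage A n ◁ freeι A m) ≫ M n
    rw [← Category.assoc, whisker_exchange, Category.assoc, hM, hM, ← Category.assoc,
      mulAux_conn_left, Category.assoc, connTo_iota]
  -- the colimit `μ : X∞ ⊗ X∞ ⟶ X∞`
  have hcR : IsColimit ((tensorRight (freeUniverse A)).mapCocone
      (colimit.cocone (freeChain A))) := isColimitOfPreserves _ (colimit.isColimit _)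
  let μcone : Cocone (freeChain A ⋙ tensorRight (freeUniverse A)) :=
    { pt := freeUniverse A
      ι := NatTrans.ofSequence (fun n => M n)
        (by
          intro n
          rw [Functor.comp_map,
            show (freeChain A).map (homOfLE (n.le_add_right 1)) = freeConn A n from
              connTo_succ A n]
          show (freeConn A n ▷ freeUniverse A) ≫ M (n + 1) = M n ≫ 𝟙 _
          rw [Category.comp_id, hMnat]) }
  let μ : freeUniverse A ⊗ freeUniverse A ⟶ freeUniverse A := hcR.desc μcone
  have hμ : ∀ n, (freeι A n ▷ freeUniverse A) ≫ μ = M n := fun n => hcR.fac μcone n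
  -- the section `s : X∞ ⟶ X₁ ⊗ X∞`
  let scone : Cocone (freeChain A) :=
    { pt := freeStage A 1 ⊗ freeUniverse A
      ι := NatTrans.ofSequence
        (fun k => match k with
          | 0 => freeConn A 0 ≫ freeSec A 0 ≫ (freeStage A 1 ◁ freeι A 0)
          | (m + 1) => freeSec A m ≫ (freeStage A 1 ◁ freeι A m))
        (by
          intro k
          rw [show (freeChain A).map (homOfLE (k.le_add_right 1)) = freeConn A k from
            connTo_succ A k]
          match k with
          | 0 => exact (Category.comp_id _).symm
          | (m + 1) =>
              refine Eq.trans ?_ (Category.comp_id _).symm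
              show freeConn A (m + 1) ≫ freeSec A (m + 1) ≫ (freeStage A 1 ◁ freeι A (m + 1))
                = freeSec A m ≫ (freeStage A 1 ◁ freeι A m)
              rw [← Category.assoc, sec_conn, Category.assoc,
                ← MonoidalCategory.whiskerLeft_comp, iota_conn]) }
  let s : freeUniverse A ⟶ freeStage A 1 ⊗ freeUniverse A := colimit.desc (freeChain A) scone
  have hs : ∀ m, freeι A (m + 1) ≫ s = freeSec A m ≫ (freeStage A 1 ◁ freeι A m) :=
    fun m => colimit.ι_desc scone (m + 1)
  have hs0 : freeι A 0 ≫ s =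
      freeConn A 0 ≫ freeSec A 0 ≫ (freeStage A 1 ◁ freeι A 0) :=
    colimit.ι_desc scone 0
  have hμ1 : M 1 = (freeι A 1 ▷ freeUniverse A) ≫ μ := (hμ 1).symm
  have hsec : s ≫ M 1 = 𝟙 (freeUniverse A) := by
    apply colimit.hom_ext
    intro k
    show freeι A k ≫ s ≫ M 1 = freeι A k ≫ 𝟙 _
    rw [Category.comp_id]
    match k with
    | 0 =>
        rw [← Category.assoc, hs0, Category.assoc, Category.assoc, hM 1 0,
          show freeSec A 0 ≫ freeMulAux A 1 0 ≫ freeι A (1 + 0) = freeι A 1 from by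
            rw [← Category.assoc, sec_mulAux,
              eqToHom_iota A (by omega : 0 + 1 = 1 + 0)],
          iota_conn]
    | (m + 1) =>
        rw [← Category.assoc, hs, Category.assoc, hM 1 m, ← Category.assoc, sec_mulAux,
          eqToHom_iota A (by omega : m + 1 = 1 + m)]
  refine ⟨μ, M 1, s, ?_, fun m => hM 1 m, hs, hμ1, hsec, ?_⟩
  · intro n m
    rw [MonoidalCategory.tensorHom_def', Category.assoc, hμ, hM]
  · rw [← hμ1, hsec]
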